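/- A real analytic function h : ℝ → ℝ whose Taylor series at some point x₀ has all coefficients nonnegative extends to (equals the restriction of) an entire function; equivalently, its Taylor series at x₀ has infinite radius of convergence. -/

import Mathlib

open scoped ENNReal NNReal
open Filter Set

/-- Triangle reindexing: pairs `(n, k)` with `k ≤ n` correspond to pairs `(n - k, k)`. -/
private def triEquiv : (Σ n : ℕ, Fin (n + 1)) ≃ ℕ × ℕ where
  toFun x := (x.1 - x.2.1, x.2.1)
  invFun y := ⟨y.1 + y.2, ⟨y.2, by omega⟩⟩
  left_inv := by
    rintro ⟨n, ⟨k, hk⟩⟩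
    have h1 : n - k + k = n := by omega
    show (⟨n - k + k, ⟨k, by omega⟩⟩ : Σ n : ℕ, Fin (n + 1)) = ⟨n, ⟨k, hk⟩⟩
    exact Sigma.ext h1 ((Fin.heq_ext_iff (by show n - k + k + 1 = n + 1; omega)).2 rfl)
  right_inv := by rintro ⟨a, b⟩; simp

/-- Tonelli-style rearrangement of the binomial double series in `ℝ≥0∞`. -/
private lemma tonelli_aux (A : ℕ → ℝ≥0∞) (u s : ℝ≥0∞) :
    ∑' kl : ℕ × ℕ,
        ((kl.1 + kl.2).choose kl.2 : ℝ≥0∞) * A (kl.1 + kl.2) * u ^ kl.2 * s ^ kl.1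
      = ∑' n, A n * (u + s) ^ n := by
  rw [← Equiv.tsum_eq triEquiv
      (fun kl : ℕ × ℕ =>
        ((kl.1 + kl.2).choose kl.2 : ℝ≥0∞) * A (kl.1 + kl.2) * u ^ kl.2 * s ^ kl.1),
    ENNReal.tsum_sigma']
  refine tsum_congr fun n => ?_
  rw [tsum_fintype]
  simp only [triEquiv, Equiv.coe_fn_mk]
  rw [Fin.sum_univ_eq_sum_range
    (fun k : ℕ => (((n - k) + k).choose k : ℝ≥0∞) * A ((n - k) + k) * u ^ k * s ^ (n - k))]
  rw [add_pow, Finset.mul_sum]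
  refine Finset.sum_congr rfl fun k hk => ?_
  have hkn : k ≤ n := Nat.lt_succ_iff.1 (Finset.mem_range.1 hk)
  rw [Nat.sub_add_cancel hkn]
  ring

/-- The coefficients of the scalar power series `p.changeOrigin u` are given by the
expected binomial series. -/
private lemma coeff_changeOrigin_hasSum (p : FormalMultilinearSeries ℝ ℝ ℝ) {u : ℝ≥0}
    (hu : (u : ℝ≥0∞) < p.radius) (k : ℕ) :
    HasSum (fun l => ((k + l).choose l : ℝ) * p.coeff (k + l) * (u : ℝ) ^ l)
      ((p.changeOrigin (u : ℝ)).coeff k) := by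
  have hterm : ∀ l, (p.changeOriginSeries k l fun _ => (u : ℝ)) (fun _ => (1 : ℝ))
      = ((k + l).choose l : ℝ) * p.coeff (k + l) * (u : ℝ) ^ l := by
    intro l
    have h1 : ∀ (s : Finset (Fin (k + l))) (hs : s.card = l),
        (p.changeOriginSeriesTerm k l s hs (fun _ => (u : ℝ))) (fun _ => (1 : ℝ))
          = p.coeff (k + l) * (u : ℝ) ^ l := by
      intro s hs
      rw [p.changeOriginSeriesTerm_apply, FormalMultilinearSeries.apply_eq_prod_smul_coeff]
      have h2 : (∏ i, (s.piecewise (fun _ => (u : ℝ)) fun _ => (1 : ℝ)) i) = (u : ℝ) ^ l := by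
        rw [Finset.prod_piecewise]
        simp [hs]
      rw [h2, smul_eq_mul, mul_comm]
    have h3 : (p.changeOriginSeries k l fun _ => (u : ℝ)) (fun _ => (1 : ℝ))
        = ∑ s : {s : Finset (Fin (k + l)) // s.card = l},
            (p.changeOriginSeriesTerm k l s.1 s.2 (fun _ => (u : ℝ))) fun _ => (1 : ℝ) := by
      rw [FormalMultilinearSeries.changeOriginSeries]
      simp [ContinuousMultilinearMap.sum_apply]
    rw [h3]
    calc (∑ s : {s : Finset (Fin (k + l)) // s.card = l},
            (p.changeOriginSeriesTerm k l s.1 s.2 (fun _ => (u : ℝ))) fun _ => (1 : ℝ))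
        = ∑ _s : {s : Finset (Fin (k + l)) // s.card = l}, p.coeff (k + l) * (u : ℝ) ^ l :=
          Finset.sum_congr rfl fun s _ => h1 s.1 s.2
      _ = ((k + l).choose l : ℝ) * p.coeff (k + l) * (u : ℝ) ^ l := by
          rw [Finset.sum_const, Finset.card_univ, Fintype.card_finset_len, Fintype.card_fin,
            nsmul_eq_mul]
          ring
  have hs0 := p.changeOriginSeries_summable_aux₃ hu k
  have hsum : Summable fun l => p.changeOriginSeries k l fun _ => (u : ℝ) := by
    refine Summable.of_nnnorm_bounded hs0 fun l => ?_
    calc ‖p.changeOriginSeries k l fun _ => (u : ℝ)‖₊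
        ≤ ‖p.changeOriginSeries k l‖₊ * ∏ _i : Fin l, ‖(u : ℝ)‖₊ :=
          ContinuousMultilinearMap.le_opNNNorm _ _
      _ = ‖p.changeOriginSeries k l‖₊ * u ^ l := by
          rw [Finset.prod_const, Finset.card_univ, Fintype.card_fin, NNReal.nnnorm_eq]
  have h4 : HasSum (fun l => p.changeOriginSeries k l fun _ => (u : ℝ))
      (p.changeOrigin (u : ℝ) k) := hsum.hasSum
  have h5 := ContinuousMultilinearMap.hasSum_eval h4 fun _ => (1 : ℝ)
  have h6 : (p.changeOrigin (u : ℝ) k) (fun _ => (1 : ℝ)) = (p.changeOrigin (u : ℝ)).coeff k := rfl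
  rw [h6] at h5
  exact (funext hterm : _ = _) ▸ h5

/-- Key Pringsheim-type step: if all coefficients of `p` are nonnegative, `u < p.radius`, and
`S` is smaller than the radius of `p.changeOrigin u`, then `u + S ≤ p.radius`. -/
private lemma key_radius (p : FormalMultilinearSeries ℝ ℝ ℝ) (hc : ∀ n, 0 ≤ p.coeff n)
    (u S : ℝ≥0) (hu : (u : ℝ≥0∞) < p.radius)
    (hS : (S : ℝ≥0∞) < (p.changeOrigin (u : ℝ)).radius) :
    ((u + S : ℝ≥0) : ℝ≥0∞) ≤ p.radius := by
  set q := p.changeOrigin (u : ℝ) with hqdef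
  have hcs := coeff_changeOrigin_hasSum p hu
  have hterm_nonneg : ∀ k l, 0 ≤ ((k + l).choose l : ℝ) * p.coeff (k + l) * (u : ℝ) ^ l :=
    fun k l => mul_nonneg (mul_nonneg (Nat.cast_nonneg _) (hc _)) (pow_nonneg u.coe_nonneg _)
  have hc0 : ∀ k, 0 ≤ q.coeff k := fun k => (hcs k).nonneg fun l => hterm_nonneg k l
  have hqsum : Summable fun k => q.coeff k * (S : ℝ) ^ k := by
    refine (q.summable_norm_mul_pow hS).congr fun k => ?_
    rw [FormalMultilinearSeries.norm_apply_eq_norm_coef, Real.norm_eq_abs, abs_of_nonneg (hc0 k)]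
  have hA : ∀ n, (‖p n‖₊ : ℝ≥0∞) = ENNReal.ofReal (p.coeff n) := by
    intro n
    have h1 : ‖p n‖₊ = ‖p.coeff n‖₊ := by
      ext
      simp [FormalMultilinearSeries.norm_apply_eq_norm_coef]
    rw [h1]; exact Real.enorm_eq_ofReal (hc n)
  have big : (∑' n, ((‖p n‖₊ * (u + S) ^ n : ℝ≥0) : ℝ≥0∞))
      = ENNReal.ofReal (∑' k, q.coeff k * (S : ℝ) ^ k) := by
    calc (∑' n, ((‖p n‖₊ * (u + S) ^ n : ℝ≥0) : ℝ≥0∞))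
        = ∑' n, ENNReal.ofReal (p.coeff n) * ((u : ℝ≥0∞) + (S : ℝ≥0∞)) ^ n := by
          refine tsum_congr fun n => ?_
          push_cast
          rw [hA]
      _ = ∑' kl : ℕ × ℕ, ((kl.1 + kl.2).choose kl.2 : ℝ≥0∞) *
            ENNReal.ofReal (p.coeff (kl.1 + kl.2)) * (u : ℝ≥0∞) ^ kl.2 * (S : ℝ≥0∞) ^ kl.1 :=
          (tonelli_aux (fun n => ENNReal.ofReal (p.coeff n)) _ _).symm
      _ = ∑' (k : ℕ) (l : ℕ), ((k + l).choose l : ℝ≥0∞) *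
            ENNReal.ofReal (p.coeff (k + l)) * (u : ℝ≥0∞) ^ l * (S : ℝ≥0∞) ^ k :=
          ENNReal.tsum_prod'
      _ = ∑' k : ℕ, (∑' l : ℕ, ((k + l).choose l : ℝ≥0∞) *
            ENNReal.ofReal (p.coeff (k + l)) * (u : ℝ≥0∞) ^ l) * (S : ℝ≥0∞) ^ k := by
          refine tsum_congr fun k => ?_
          rw [ENNReal.tsum_mul_right]
      _ = ∑' k : ℕ, ENNReal.ofReal (q.coeff k) * (S : ℝ≥0∞) ^ k := by
          refine tsum_congr fun k => ?_
          congr 1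
          rw [← (hcs k).tsum_eq,
            ENNReal.ofReal_tsum_of_nonneg (hterm_nonneg k) (hcs k).summable]
          refine tsum_congr fun l => ?_
          rw [ENNReal.ofReal_mul (mul_nonneg (Nat.cast_nonneg _) (hc _)),
            ENNReal.ofReal_mul (Nat.cast_nonneg _)]
          rw [ENNReal.ofReal_natCast, ENNReal.ofReal_pow u.coe_nonneg, ENNReal.ofReal_coe_nnreal]
      _ = ∑' k : ℕ, ENNReal.ofReal (q.coeff k * (S : ℝ) ^ k) := by
          refine tsum_congr fun k => ?_
          rw [ENNReal.ofReal_mul (hc0 k), ENNReal.ofReal_pow S.coe_nonneg, ENNReal.ofReal_coe_nnreal]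
      _ = ENNReal.ofReal (∑' k, q.coeff k * (S : ℝ) ^ k) :=
          (ENNReal.ofReal_tsum_of_nonneg
            (fun k => mul_nonneg (hc0 k) (pow_nonneg S.coe_nonneg k)) hqsum).symm
  have hne : (∑' n, ((‖p n‖₊ * (u + S) ^ n : ℝ≥0) : ℝ≥0∞)) ≠ ⊤ := by
    rw [big]; exact ENNReal.ofReal_ne_top
  exact p.le_radius_of_summable_nnnorm (ENNReal.tsum_coe_ne_top_iff_summable.1 hne)

/-- A function `h : ℝ → ℝ`, real analytic everywhere, whose Taylor coefficients at some point
`x₀` are all nonnegative, is the restriction of an entire function; equivalently its Taylor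
series at `x₀` converges to `h` on all of `ℝ`. -/
theorem stmt_11 (h : ℝ → ℝ) (han : ∀ x : ℝ, AnalyticAt ℝ h x) (x₀ : ℝ)
    (hpos : ∀ n : ℕ, 0 ≤ iteratedDeriv n h x₀ / (Nat.factorial n : ℝ)) :
    (∃ F : ℂ → ℂ, Differentiable ℂ F ∧ ∀ x : ℝ, F x = h x) ∧
    ∀ x : ℝ, HasSum (fun n : ℕ => iteratedDeriv n h x₀ / (Nat.factorial n : ℝ) * (x - x₀) ^ n)
      (h x) := by
  obtain ⟨p, hp⟩ := han x₀
  -- identify the coefficients of `p` with the Taylor coefficients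
  have hcoeff : ∀ n, p.coeff n = iteratedDeriv n h x₀ / (Nat.factorial n : ℝ) := by
    intro n
    obtain ⟨r, hb⟩ := hp
    have h1 := hb.factorial_smul (1 : ℝ) n
    have h2 : iteratedFDeriv ℝ n h x₀ (fun _ => (1 : ℝ)) = iteratedDeriv n h x₀ :=
      (iteratedDeriv_eq_iteratedFDeriv).symm
    rw [h2] at h1
    have h3 : (Nat.factorial n : ℝ) * p.coeff n = iteratedDeriv n h x₀ := by
      rw [← h1, nsmul_eq_mul]
      rfl
    field_simp [← h3]
    linarith
  have hcpos : ∀ n, 0 ≤ p.coeff n := fun n => (hcoeff n) ▸ hpos n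
  -- `h` has the power series `p` on every ball of radius at most `p.radius`
  have hball' : ∀ r' : ℝ≥0, 0 < r' → (r' : ℝ≥0∞) ≤ p.radius →
      HasFPowerSeriesOnBall h p x₀ r' := by
    intro r' hr0 hrle
    have hgball : HasFPowerSeriesOnBall (fun y => p.sum (y - x₀)) p x₀ r' :=
      { r_le := hrle
        r_pos := ENNReal.coe_pos.2 hr0
        hasSum := fun {y} hy => by
          have hy' : y ∈ EMetric.ball (0 : ℝ) p.radius := EMetric.ball_subset_ball hrle hy
          simpa using p.hasSum hy' }
    have hgat := hgball.hasFPowerSeriesAt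
    have hdiff := hp.sub hgat
    rw [sub_self] at hdiff
    have hev := hdiff.eventually_eq_zero
    have hhg : h =ᶠ[nhds x₀] fun y => p.sum (y - x₀) := by
      filter_upwards [hev] with z hz
      have : h z - p.sum (z - x₀) = 0 := hz
      linarith
    have heq : Set.EqOn h (fun y => p.sum (y - x₀)) (Metric.ball x₀ (r' : ℝ)) := by
      refine AnalyticOnNhd.eqOn_of_preconnected_of_eventuallyEq (𝕜 := ℝ)
        (fun y _ => han y) ?_ ?_ ?_ hhg
      · rw [← Metric.emetric_ball_nnreal]; exact hgball.analyticOnNhd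
      · exact (convex_ball x₀ (r' : ℝ)).isPreconnected
      · exact Metric.mem_ball_self (by exact_mod_cast hr0)
    refine hgball.congr ?_
    rw [Metric.emetric_ball_nnreal]
    exact fun y hy => (heq hy).symm
  -- the radius is infinite
  have hrtop : p.radius = ⊤ := by
    by_contra hne
    set Rn := p.radius.toNNReal with hRndef
    have hReq : (Rn : ℝ≥0∞) = p.radius := ENNReal.coe_toNNReal hne
    have hR0 : 0 < Rn := by
      have h0 := hp.radius_pos
      rw [← hReq] at h0
      exact_mod_cast h0
    obtain ⟨q', hq'at⟩ := han (x₀ + Rn)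
    obtain ⟨r₁, hq'⟩ := hq'at
    set m : ℝ≥0∞ := min r₁ (Rn : ℝ≥0∞) with hmdef
    have hm0 : 0 < m := lt_min hq'.r_pos (by exact_mod_cast hR0)
    have hmne : m ≠ ⊤ := ne_top_of_le_ne_top ENNReal.coe_ne_top (min_le_right _ _)
    set ν := m.toNNReal with hνdef
    have hmcoe : (ν : ℝ≥0∞) = m := ENNReal.coe_toNNReal hmne
    have hν0 : 0 < ν := ENNReal.toNNReal_pos hm0.ne' hmne
    have hq4 : ν / 4 < ν := by
      rw [← NNReal.coe_lt_coe]
      have hν' : (0 : ℝ) < ν := hν0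
      push_cast
      linarith
    have hq8 : ν / 8 < ν := by
      rw [← NNReal.coe_lt_coe]
      have hν' : (0 : ℝ) < ν := hν0
      push_cast
      linarith
    have hνle : ν ≤ Rn := by
      have : (ν : ℝ≥0∞) ≤ (Rn : ℝ≥0∞) := by rw [hmcoe]; exact min_le_right _ _
      exact_mod_cast this
    have hq2 : HasFPowerSeriesOnBall h q' (x₀ + Rn) (ν : ℝ≥0∞) := by
      refine hq'.mono (by exact_mod_cast hν0) (by rw [hmcoe]; exact min_le_left _ _)
    have hquarter : (‖(-((ν / 4 : ℝ≥0) : ℝ))‖₊ : ℝ≥0∞) < (ν : ℝ≥0∞) := by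
      rw [nnnorm_neg, NNReal.nnnorm_eq]
      exact_mod_cast hq4
    have hw := hq2.changeOrigin hquarter
    simp only [nnnorm_neg, NNReal.nnnorm_eq] at hw
    set u : ℝ≥0 := Rn - ν / 4 with hudef
    have hν4le : ν / 4 ≤ Rn := le_trans hq4.le hνle
    have hucoe : (u : ℝ) = (Rn : ℝ) - ((ν : ℝ) / 4) := by
      rw [hudef, NNReal.coe_sub hν4le]
      norm_num
    set r'' : ℝ≥0 := Rn - ν / 8 with hr''def
    have hν8lt : ν / 8 < ν := hq8
    have hr''coe : (r'' : ℝ) = (Rn : ℝ) - ((ν : ℝ) / 8) := by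
      rw [hr''def, NNReal.coe_sub (le_trans hν8lt.le hνle)]
      norm_num
    have hr''pos : 0 < r'' := by
      rw [← NNReal.coe_lt_coe, hr''coe]
      have hν' : (0 : ℝ) < ν := hν0
      have : (ν : ℝ) ≤ Rn := hνle
      push_cast
      linarith
    have hb'' := hball' r'' hr''pos (by rw [← hReq]; exact_mod_cast tsub_le_self)
    have hult : u < r'' := by
      rw [← NNReal.coe_lt_coe, hucoe, hr''coe]
      have hν' : (0 : ℝ) < ν := hν0
      linarith
    have hu_lt : (‖((u : ℝ≥0) : ℝ)‖₊ : ℝ≥0∞) < (r'' : ℝ≥0∞) := by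
      rw [NNReal.nnnorm_eq]
      exact_mod_cast hult
    have hqp := hb''.changeOrigin hu_lt
    rw [NNReal.nnnorm_eq] at hqp
    have hcenter : x₀ + ((u : ℝ≥0) : ℝ) = (x₀ + (Rn : ℝ)) + (-((ν / 4 : ℝ≥0) : ℝ)) := by
      rw [hucoe]
      push_cast
      ring
    have hwAt := hw.hasFPowerSeriesAt
    rw [← hcenter] at hwAt
    have huniq : p.changeOrigin ((u : ℝ≥0) : ℝ) = q'.changeOrigin (-((ν / 4 : ℝ≥0) : ℝ)) :=
      hqp.hasFPowerSeriesAt.eq_formalMultilinearSeries hwAt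
    have hrad : ((ν : ℝ≥0∞) - ((ν / 4 : ℝ≥0) : ℝ≥0∞))
        ≤ (p.changeOrigin ((u : ℝ≥0) : ℝ)).radius := by
      rw [huniq]
      exact hw.r_le
    have hS : (((ν / 2 : ℝ≥0) : ℝ≥0∞)) < (p.changeOrigin ((u : ℝ≥0) : ℝ)).radius := by
      refine lt_of_lt_of_le ?_ hrad
      rw [← ENNReal.coe_sub]
      have : ν / 2 < ν - ν / 4 := by
        rw [← NNReal.coe_lt_coe, NNReal.coe_sub hq4.le]
        have hν' : (0 : ℝ) < ν := hν0
        push_cast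
        linarith
      exact_mod_cast this
    have hu_rad : ((u : ℝ≥0) : ℝ≥0∞) < p.radius := by
      rw [← hReq]
      have : u < Rn := by
        rw [← NNReal.coe_lt_coe, hucoe]
        have hν' : (0 : ℝ) < ν := hν0
        linarith
      exact_mod_cast this
    have hfin := key_radius p hcpos u (ν / 2) hu_rad hS
    rw [← hReq] at hfin
    have hle : u + ν / 2 ≤ Rn := by exact_mod_cast hfin
    rw [← NNReal.coe_le_coe, NNReal.coe_add, hucoe] at hle
    have hν' : (0 : ℝ) < ν := hν0
    have : ((ν / 2 : ℝ≥0) : ℝ) = (ν : ℝ) / 2 := by push_cast; ring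
    rw [this] at hle
    linarith
  -- the HasSum statement
  have hHS : ∀ x : ℝ,
      HasSum (fun n : ℕ => iteratedDeriv n h x₀ / (Nat.factorial n : ℝ) * (x - x₀) ^ n) (h x) := by
    intro x
    have hb := hball' (‖x - x₀‖₊ + 1) (by positivity) (by rw [hrtop]; exact le_top)
    have hx : x ∈ Metric.eball x₀ ((‖x - x₀‖₊ + 1 : ℝ≥0) : ℝ≥0∞) := by
      rw [EMetric.mem_ball, edist_eq_enorm_sub]
      show (‖x - x₀‖₊ : ℝ≥0∞) < _
      exact_mod_cast lt_add_one (‖x - x₀‖₊)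
    have h1 := hb.hasSum_sub hx
    have h2 : (fun n => p n fun _ => x - x₀)
        = fun n : ℕ => iteratedDeriv n h x₀ / (Nat.factorial n : ℝ) * (x - x₀) ^ n := by
      funext n
      rw [FormalMultilinearSeries.apply_eq_pow_smul_coeff, hcoeff n, smul_eq_mul, mul_comm]
    rw [h2] at h1
    exact h1
  refine ⟨?_, hHS⟩
  -- the entire extension
  set c : ℕ → ℂ := fun n => ((p.coeff n : ℝ) : ℂ) with hcdef
  set P := FormalMultilinearSeries.ofScalars ℂ c with hPdef
  have hPnorm : ∀ n, ‖P n‖ = ‖p n‖ := by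
    intro n
    rw [hPdef, FormalMultilinearSeries.ofScalars_norm,
      FormalMultilinearSeries.norm_apply_eq_norm_coef]
    simp [hcdef]
  have hPtop : P.radius = ⊤ := by
    refine top_unique (ENNReal.le_of_forall_nnreal_lt fun r _ => ?_)
    refine P.le_radius_of_summable_norm ?_
    refine (p.summable_norm_mul_pow (r := r) (by rw [hrtop]; exact ENNReal.coe_lt_top)).congr
      fun n => ?_
    rw [hPnorm]
  have hPb : HasFPowerSeriesOnBall P.sum P 0 ⊤ := by
    have hb := P.hasFPowerSeriesOnBall (by rw [hPtop]; exact ENNReal.zero_lt_top)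
    rwa [hPtop] at hb
  refine ⟨fun z => P.sum (z - (x₀ : ℂ)), ?_, ?_⟩
  · intro z
    have ha : AnalyticAt ℂ P.sum (z - (x₀ : ℂ)) :=
      hPb.analyticAt_of_mem (by simp [EMetric.mem_ball])
    exact ha.differentiableAt.comp z ((differentiable_id.sub_const _) z)
  · intro x
    have h1 := hPb.hasSum (y := (x : ℂ) - (x₀ : ℂ)) (by simp [EMetric.mem_ball])
    rw [zero_add] at h1
    have h2 : HasSum
        (fun n : ℕ => (((iteratedDeriv n h x₀ / (Nat.factorial n : ℝ)) * (x - x₀) ^ n : ℝ) : ℂ))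
        ((h x : ℝ) : ℂ) := (hHS x).mapL Complex.ofRealCLM
    have h3 : (fun n => P n fun _ => ((x : ℂ) - (x₀ : ℂ)))
        = fun n : ℕ => (((iteratedDeriv n h x₀ / (Nat.factorial n : ℝ)) * (x - x₀) ^ n : ℝ) : ℂ) := by
      funext n
      rw [hPdef, FormalMultilinearSeries.ofScalars_apply_eq, hcdef]
      simp only [smul_eq_mul]
      rw [hcoeff n]
      push_cast
      ring
    rw [h3] at h1
    exact h1.unique h2
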